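/- Let A ∈ ℝ^{(2N-1)d × 2Nd} be the block bidiagonal matrix with blocks A_{i,i} = I_d and A_{i,i+1} = -I_d for i = 1,...,2N-1 (all other blocks zero). Then the condition number κ_A = σ_max(A)/σ_min(A) satisfies κ_A ≤ √(2N² - 1). -/

import Mathlib

open Real Matrix

/-- Telescoping shift identity for sums of reals. -/
lemma sum_shift (n : ℕ) (f : ℕ → ℝ) :
    ∑ i ∈ Finset.range n, f (i+1) = ∑ i ∈ Finset.range n, f i + f n - f 0 := by
  have h1 := Finset.sum_range_succ' f n
  have h2 := Finset.sum_range_succ f n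
  rw [h2] at h1
  linarith

/-- Discrete Wirtinger-type inequality with constant 2/N². -/
lemma wirt (N : ℕ) (hN : 1 ≤ N) (f : ℕ → ℝ) (h0 : f 0 = 0) (h2N : f (2*N) = 0) :
    2 * ∑ j ∈ Finset.range (2*N), f j ^ 2 ≤
      (N:ℝ)^2 * ∑ i ∈ Finset.range (2*N), (f (i+1) - f i)^2 := by
  clear hN
  set c : ℕ → ℝ := fun j => (j:ℝ) * (2*(N:ℝ) - (j:ℝ)) with hc
  set u : ℕ → ℝ := fun j => f j / c j with hu
  have hfcu : ∀ j, j ≤ 2*N → f j = c j * u j := by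
    intro j hj
    rcases eq_or_ne j 0 with rfl | hj0
    · simp [h0, hc, hu]
    rcases eq_or_ne j (2*N) with rfl | hj2
    · simp [h2N, hc, hu]
    have hj1 : 0 < j := Nat.pos_of_ne_zero hj0
    have hj2' : j < 2*N := lt_of_le_of_ne hj hj2
    have hr1 : (0:ℝ) < (j:ℝ) := by exact_mod_cast hj1
    have hr2 : (j:ℝ) < 2*(N:ℝ) := by exact_mod_cast (by exact_mod_cast hj2' : (j:ℝ) < ((2*N:ℕ):ℝ))
    have hcj : c j ≠ 0 := by
      rw [hc]
      have : (0:ℝ) < (j:ℝ) * (2*(N:ℝ) - (j:ℝ)) := mul_pos hr1 (by linarith)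
      exact ne_of_gt this
    rw [hu]
    field_simp
  set G : ℕ → ℝ := fun j => (N:ℝ)^2 * ((2*(N:ℝ) - 2*(j:ℝ) - 1) * c j * u j ^ 2) with hG
  have hG0 : G 0 = 0 := by simp [hG, hc]
  have hG2N : G (2*N) = 0 := by
    have : u (2*N) = 0 := by simp [hu, h2N]
    simp [hG, this]
  have edge : ∀ i ∈ Finset.range (2*N),
      2 * f (i+1)^2 + (G (i+1) - G i) ≤ (N:ℝ)^2 * (f (i+1) - f i)^2 := by
    intro i hi
    rw [Finset.mem_range] at hi
    rw [hfcu (i+1) (by omega), hfcu i (by omega), hG]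
    simp only [hc]
    push_cast
    have hiN : (i:ℝ) + 1 ≤ 2*(N:ℝ) := by
      have h' : i + 1 ≤ 2*N := hi
      exact_mod_cast (by exact_mod_cast h' : ((i+1:ℕ):ℝ) ≤ ((2*N:ℕ):ℝ))
    have hi0 : (0:ℝ) ≤ (i:ℝ) := Nat.cast_nonneg i
    have hc1 : (0:ℝ) ≤ ((i:ℝ)+1) * (2*(N:ℝ) - ((i:ℝ)+1)) := by nlinarith
    have hc0 : (0:ℝ) ≤ (i:ℝ) * (2*(N:ℝ) - (i:ℝ)) := by nlinarith
    have hbound : ((i:ℝ)+1) * (2*(N:ℝ) - ((i:ℝ)+1)) ≤ (N:ℝ)^2 := by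
      nlinarith [sq_nonneg ((i:ℝ)+1 - (N:ℝ))]
    nlinarith [mul_nonneg (mul_nonneg hc0 hc1) (sq_nonneg (u (i+1) - u i)),
      mul_nonneg (mul_nonneg (sub_nonneg.mpr hbound) hc1) (sq_nonneg (u (i+1)))]
  have hsum := Finset.sum_le_sum edge
  rw [Finset.sum_add_distrib, Finset.sum_range_sub G] at hsum
  have hshift := sum_shift (2*N) (fun j => f j ^ 2)
  simp only [h0, h2N] at hshift
  rw [← Finset.mul_sum] at hsum
  rw [← Finset.mul_sum] at hsum
  simp only [hG0, hG2N] at hsum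
  linarith [hsum, hshift]

/-- The plus-sign variant, by flipping signs of alternate entries. -/
lemma wirtP (N : ℕ) (hN : 1 ≤ N) (f : ℕ → ℝ) (h0 : f 0 = 0) (h2N : f (2*N) = 0) :
    2 * ∑ j ∈ Finset.range (2*N), f j ^ 2 ≤
      (N:ℝ)^2 * ∑ i ∈ Finset.range (2*N), (f (i+1) + f i)^2 := by
  have key := wirt N hN (fun j => (-1:ℝ)^j * f j) (by simp [h0]) (by simp [h2N])
  have hsq : ∀ j : ℕ, ((-1:ℝ)^j)^2 = 1 := by
    intro j
    rw [← pow_mul, mul_comm, pow_mul]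
    simp
  have e1 : ∑ j ∈ Finset.range (2*N), ((-1:ℝ)^j * f j) ^ 2
      = ∑ j ∈ Finset.range (2*N), f j ^ 2 := by
    refine Finset.sum_congr rfl fun j _ => ?_
    rw [mul_pow, hsq]
    ring
  have e2 : ∑ i ∈ Finset.range (2*N), ((-1:ℝ)^(i+1) * f (i+1) - (-1:ℝ)^i * f i) ^ 2
      = ∑ i ∈ Finset.range (2*N), (f (i+1) + f i)^2 := by
    refine Finset.sum_congr rfl fun i _ => ?_
    have h : ((-1:ℝ)^(i+1) * f (i+1) - (-1:ℝ)^i * f i)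
        = (-1:ℝ)^i * (-(f (i+1) + f i)) := by
      rw [pow_succ]
      ring
    rw [h, mul_pow, hsq]
    ring
  rw [e1, e2] at key
  exact key

/-- Parity identity: sum of (diff)² and (sum)² equals 4 × sum of squares. -/
lemma sum_pm (n : ℕ) (f : ℕ → ℝ) (h0 : f 0 = 0) (h2N : f n = 0) :
    ∑ i ∈ Finset.range n, ((f (i+1) - f i)^2 + (f (i+1) + f i)^2)
      = 4 * ∑ j ∈ Finset.range n, f j ^ 2 := by
  have e : ∀ i, (f (i+1) - f i)^2 + (f (i+1) + f i)^2 = 2 * f (i+1)^2 + 2 * f i ^2 := by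
    intro i; ring
  simp only [e]
  rw [Finset.sum_add_distrib, ← Finset.mul_sum, ← Finset.mul_sum]
  have hshift := sum_shift n (fun j => f j ^ 2)
  simp only [h0, h2N] at hshift
  linarith

/-- Extension of `v` (viewed per-column) to `ℕ`, with zero at `0` and beyond `2N-1`. -/
def gfun (N d : ℕ) (v : Fin (2*N-1) × Fin d → ℝ) (k : Fin d) (j : ℕ) : ℝ :=
  if h : 1 ≤ j ∧ j ≤ 2*N - 1 then v (⟨j-1, by omega⟩, k) else 0

lemma gfun_zero (N d : ℕ) (v : Fin (2*N-1) × Fin d → ℝ) (k : Fin d) :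
    gfun N d v k 0 = 0 := by simp [gfun]

lemma gfun_2N (N d : ℕ) (hN : 1 ≤ N) (v : Fin (2*N-1) × Fin d → ℝ) (k : Fin d) :
    gfun N d v k (2*N) = 0 := by
  rw [gfun, dif_neg]
  omega

lemma gfun_sq_sum (N d : ℕ) (hN : 1 ≤ N) (v : Fin (2*N-1) × Fin d → ℝ) (k : Fin d) :
    ∑ j ∈ Finset.range (2*N), (gfun N d v k j)^2 = ∑ p1 : Fin (2*N-1), v (p1,k)^2 := by
  have key : ∀ p1 : Fin (2*N-1), (gfun N d v k ((p1:ℕ)+1))^2 = v (p1,k)^2 := by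
    intro p1
    rw [gfun, dif_pos ⟨by omega, by have := p1.isLt; omega⟩]
    exact congrArg (fun x => x^2) (congrArg v (Prod.ext (Fin.ext (by dsimp only; omega)) rfl))
  have h := Finset.sum_range_succ' (fun j => (gfun N d v k j)^2) (2*N-1)
  rw [show 2*N-1+1 = 2*N from by omega] at h
  rw [h, gfun_zero]
  rw [← Fin.sum_univ_eq_sum_range (fun i => (gfun N d v k (i+1))^2) (2*N-1)]
  rw [Finset.sum_congr rfl (fun p1 _ => key p1)]
  norm_num

lemma ycomp (N d : ℕ) (hN : 1 ≤ N)
    (A : Matrix (Fin (2 * N - 1) × Fin d) (Fin (2 * N) × Fin d) ℝ)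
    (hA : ∀ p q, A p q =
      if (q.1 : ℕ) = (p.1 : ℕ) ∧ q.2 = p.2 then 1
      else if (q.1 : ℕ) = (p.1 : ℕ) + 1 ∧ q.2 = p.2 then -1 else 0)
    (v : Fin (2*N-1) × Fin d → ℝ) (q1 : Fin (2*N)) (k : Fin d) :
    (A.transpose.mulVec v) (q1, k)
      = gfun N d v k ((q1:ℕ)+1) - gfun N d v k (q1:ℕ) := by
  have hsplit : ∀ p : Fin (2*N-1) × Fin d, A.transpose (q1,k) p * v p =
      (if (q1:ℕ) = (p.1:ℕ) ∧ k = p.2 then v p else 0) +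
      (if (q1:ℕ) = (p.1:ℕ)+1 ∧ k = p.2 then -(v p) else 0) := by
    intro p
    rw [Matrix.transpose_apply, hA]
    by_cases h1 : (q1:ℕ) = (p.1:ℕ) ∧ k = p.2
    · rw [if_pos h1, if_pos h1, if_neg (by rintro ⟨ha, -⟩; omega)]
      ring
    · rw [if_neg h1, if_neg h1]
      by_cases h2 : (q1:ℕ) = (p.1:ℕ)+1 ∧ k = p.2
      · rw [if_pos h2, if_pos h2]; ring
      · rw [if_neg h2, if_neg h2]; ring
  have hmv : (A.transpose.mulVec v) (q1, k)
      = ∑ p : Fin (2*N-1) × Fin d, A.transpose (q1,k) p * v p := rfl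
  rw [hmv, Finset.sum_congr rfl (fun p _ => hsplit p), Finset.sum_add_distrib]
  have hS1 : (∑ p : Fin (2*N-1) × Fin d,
      if (q1:ℕ) = (p.1:ℕ) ∧ k = p.2 then v p else 0) = gfun N d v k ((q1:ℕ)+1) := by
    by_cases hq : (q1:ℕ) + 1 ≤ 2*N - 1
    · have hlt : (q1:ℕ) < 2*N - 1 := by omega
      rw [Finset.sum_eq_single ((⟨(q1:ℕ), hlt⟩ : Fin (2*N-1)), k)]
      · rw [if_pos ⟨rfl, rfl⟩, gfun, dif_pos ⟨by omega, hq⟩]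
        exact congrArg v (Prod.ext (Fin.ext (by dsimp only; omega)) rfl)
      · rintro b - hbne
        rw [if_neg]
        rintro ⟨h1, h2⟩
        exact hbne (Prod.ext (Fin.ext h1.symm) h2.symm)
      · intro h; exact absurd (Finset.mem_univ _) h
    · rw [Finset.sum_eq_zero, gfun, dif_neg (by omega)]
      rintro b -
      rw [if_neg]
      rintro ⟨h1, -⟩
      have := b.1.isLt
      omega
  have hS2 : (∑ p : Fin (2*N-1) × Fin d,
      if (q1:ℕ) = (p.1:ℕ)+1 ∧ k = p.2 then -(v p) else 0) = -(gfun N d v k (q1:ℕ)) := by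
    by_cases hq : 1 ≤ (q1:ℕ)
    · have hlt : (q1:ℕ) - 1 < 2*N - 1 := by have := q1.isLt; omega
      rw [Finset.sum_eq_single ((⟨(q1:ℕ)-1, hlt⟩ : Fin (2*N-1)), k)]
      · rw [if_pos ⟨by dsimp only; omega, rfl⟩, gfun, dif_pos ⟨hq, by have := q1.isLt; omega⟩]
      · rintro b - hbne
        rw [if_neg]
        rintro ⟨h1, h2⟩
        exact hbne (Prod.ext (Fin.ext (by dsimp only; omega)) h2.symm)
      · intro h; exact absurd (Finset.mem_univ _) h
    · rw [Finset.sum_eq_zero, gfun, dif_neg (by omega)]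
      · simp
      rintro b -
      rw [if_neg]
      rintro ⟨h1, -⟩
      omega
  rw [hS1, hS2]
  ring

theorem block_bidiagonal_condition_number
    (N d : ℕ) (hN : 1 ≤ N) (hd : 1 ≤ d)
    (A : Matrix (Fin (2 * N - 1) × Fin d) (Fin (2 * N) × Fin d) ℝ)
    (hA : ∀ p q, A p q =
      if (q.1 : ℕ) = (p.1 : ℕ) ∧ q.2 = p.2 then 1
      else if (q.1 : ℕ) = (p.1 : ℕ) + 1 ∧ q.2 = p.2 then -1 else 0)
    (σmax σmin : ℝ) (hσmax0 : 0 ≤ σmax) (hσmin0 : 0 ≤ σmin)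
    (hσmax : σmax ^ 2 = sSup (spectrum ℝ (A * A.transpose)))
    (hσmin : σmin ^ 2 = sInf (spectrum ℝ (A * A.transpose))) :
    σmax / σmin ≤ Real.sqrt (2 * (N : ℝ) ^ 2 - 1) := by
  have hN1 : (1:ℝ) ≤ (N:ℝ) := by exact_mod_cast hN
  have hN2pos : (0:ℝ) < (N:ℝ)^2 := by positivity
  -- every spectral value lies in [2/N², 4 - 2/N²]
  have hkey : ∀ μ ∈ spectrum ℝ (A * A.transpose),
      2/(N:ℝ)^2 ≤ μ ∧ μ ≤ 4 - 2/(N:ℝ)^2 := by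
    intro μ hμ
    have hμ' : μ ∈ spectrum ℝ (Matrix.toLinAlgEquiv' (A * A.transpose)) := by
      rwa [AlgEquiv.spectrum_eq]
    have hev : Module.End.HasEigenvalue (Matrix.toLinAlgEquiv' (A * A.transpose)) μ :=
      Module.End.hasEigenvalue_iff_mem_spectrum.mpr hμ'
    obtain ⟨v, hv⟩ := hev.exists_hasEigenvector
    have hv0 : v ≠ 0 := hv.right
    have heq : (A * A.transpose).mulVec v = μ • v := by
      have h := hv.apply_eq_smul
      rwa [Matrix.toLinAlgEquiv'_apply] at h
    -- positivity of ‖v‖²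
    have hVnn : (0:ℝ) ≤ v ⬝ᵥ v := Finset.sum_nonneg (fun i _ => mul_self_nonneg (v i))
    have hVpos : (0:ℝ) < v ⬝ᵥ v := by
      rcases lt_or_eq_of_le hVnn with h | h
      · exact h
      · exact absurd (dotProduct_self_eq_zero.mp h.symm) hv0
    -- Rayleigh quotient
    set y := A.transpose.mulVec v with hy
    have hray : y ⬝ᵥ y = μ * (v ⬝ᵥ v) := by
      have h1 : v ⬝ᵥ ((A * A.transpose).mulVec v) = μ * (v ⬝ᵥ v) := by
        rw [heq, dotProduct_smul, smul_eq_mul]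
      have h2 : v ⬝ᵥ ((A * A.transpose).mulVec v) = y ⬝ᵥ y := by
        rw [← Matrix.mulVec_mulVec, Matrix.dotProduct_mulVec, ← Matrix.mulVec_transpose]
      rw [← h2, h1]
    -- sum conversions
    have hyy : y ⬝ᵥ y = ∑ k : Fin d, ∑ i ∈ Finset.range (2*N),
        (gfun N d v k (i+1) - gfun N d v k i)^2 := by
      rw [dotProduct, Fintype.sum_prod_type, Finset.sum_comm]
      refine Finset.sum_congr rfl fun k _ => ?_
      rw [← Fin.sum_univ_eq_sum_range (fun i => (gfun N d v k (i+1) - gfun N d v k i)^2) (2*N)]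
      refine Finset.sum_congr rfl fun q1 _ => ?_
      rw [hy, ycomp N d hN A hA v q1 k]
      ring
    have hpp : ∑ q : Fin (2*N) × Fin d, (y q + gfun N d v q.2 (q.1:ℕ) * 2) ^ 2
        = ∑ k : Fin d, ∑ i ∈ Finset.range (2*N),
        (gfun N d v k (i+1) + gfun N d v k i)^2 := by
      rw [Fintype.sum_prod_type, Finset.sum_comm]
      refine Finset.sum_congr rfl fun k _ => ?_
      rw [← Fin.sum_univ_eq_sum_range (fun i => (gfun N d v k (i+1) + gfun N d v k i)^2) (2*N)]
      refine Finset.sum_congr rfl fun q1 _ => ?_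
      rw [hy, ycomp N d hN A hA v q1 k]
      ring
    have hvv : v ⬝ᵥ v = ∑ k : Fin d, ∑ j ∈ Finset.range (2*N), (gfun N d v k j)^2 := by
      rw [dotProduct, Fintype.sum_prod_type, Finset.sum_comm]
      refine Finset.sum_congr rfl fun k _ => ?_
      rw [gfun_sq_sum N d hN v k]
      refine Finset.sum_congr rfl fun p1 _ => ?_
      ring
    -- apply the scalar inequalities
    have hsumE : 2 * (v ⬝ᵥ v) ≤ (N:ℝ)^2 * (y ⬝ᵥ y) := by
      rw [hvv, hyy, Finset.mul_sum, Finset.mul_sum]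
      exact Finset.sum_le_sum fun k _ =>
        wirt N hN (gfun N d v k) (gfun_zero N d v k) (gfun_2N N d hN v k)
    have hsumP : 2 * (v ⬝ᵥ v) ≤ (N:ℝ)^2 * (4 * (v ⬝ᵥ v) - y ⬝ᵥ y) := by
      have hP : ∑ k : Fin d, ∑ i ∈ Finset.range (2*N),
          (gfun N d v k (i+1) + gfun N d v k i)^2
          = 4 * (v ⬝ᵥ v) - y ⬝ᵥ y := by
        rw [hvv, hyy, Finset.mul_sum, ← Finset.sum_sub_distrib]
        refine Finset.sum_congr rfl fun k _ => ?_
        have h4 := sum_pm (2*N) (gfun N d v k) (gfun_zero N d v k) (gfun_2N N d hN v k)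
        rw [Finset.sum_add_distrib] at h4
        linarith
      calc 2 * (v ⬝ᵥ v)
          = ∑ k : Fin d, 2 * ∑ j ∈ Finset.range (2*N), (gfun N d v k j)^2 := by
            rw [hvv, Finset.mul_sum]
        _ ≤ ∑ k : Fin d, (N:ℝ)^2 * ∑ i ∈ Finset.range (2*N),
              (gfun N d v k (i+1) + gfun N d v k i)^2 :=
            Finset.sum_le_sum fun k _ =>
              wirtP N hN (gfun N d v k) (gfun_zero N d v k) (gfun_2N N d hN v k)
        _ = (N:ℝ)^2 * (4 * (v ⬝ᵥ v) - y ⬝ᵥ y) := by rw [← Finset.mul_sum, hP]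
    constructor
    · rw [div_le_iff₀ hN2pos]
      have h : 2 * (v ⬝ᵥ v) ≤ (μ * (N:ℝ)^2) * (v ⬝ᵥ v) := by
        rw [hray] at hsumE
        nlinarith
      have := (mul_le_mul_iff_of_pos_right hVpos).mp h
      linarith
    · have h : 2 * (v ⬝ᵥ v) ≤ ((4 - μ) * (N:ℝ)^2) * (v ⬝ᵥ v) := by
        rw [hray] at hsumP
        nlinarith
      have h2 := (mul_le_mul_iff_of_pos_right hVpos).mp h
      have h3 : 2/(N:ℝ)^2 ≤ 4 - μ := by
        rw [div_le_iff₀ hN2pos]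
        linarith
      linarith
  -- conclude
  rcases eq_or_lt_of_le hσmin0 with h0 | hpos
  · rw [← h0, div_zero]
    exact Real.sqrt_nonneg _
  · have hne : (spectrum ℝ (A * A.transpose)).Nonempty := by
      by_contra h
      rw [Set.not_nonempty_iff_eq_empty] at h
      rw [h, Real.sInf_empty] at hσmin
      nlinarith
    have hInf : 2/(N:ℝ)^2 ≤ sInf (spectrum ℝ (A * A.transpose)) :=
      le_csInf hne fun b hb => (hkey b hb).1
    have hnn : (0:ℝ) ≤ 4 - 2/(N:ℝ)^2 := by
      have : 2/(N:ℝ)^2 ≤ 2 := by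
        rw [div_le_iff₀ hN2pos]
        nlinarith
      linarith
    have hSup : sSup (spectrum ℝ (A * A.transpose)) ≤ 4 - 2/(N:ℝ)^2 :=
      Real.sSup_le (fun x hx => (hkey x hx).2) hnn
    have h1 : σmax^2 ≤ 4 - 2/(N:ℝ)^2 := by rw [hσmax]; exact hSup
    have h2 : 2/(N:ℝ)^2 ≤ σmin^2 := by rw [hσmin]; exact hInf
    have hcoef : (0:ℝ) ≤ 2*(N:ℝ)^2 - 1 := by nlinarith
    have hgoal2 : σmax^2 ≤ (2*(N:ℝ)^2 - 1) * σmin^2 := by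
      have e : (2*(N:ℝ)^2 - 1) * (2/(N:ℝ)^2) = 4 - 2/(N:ℝ)^2 := by
        field_simp
        ring
      nlinarith [mul_le_mul_of_nonneg_left h2 hcoef]
    rw [div_le_iff₀ hpos]
    calc σmax = Real.sqrt (σmax^2) := (Real.sqrt_sq hσmax0).symm
      _ ≤ Real.sqrt ((2*(N:ℝ)^2-1) * σmin^2) := Real.sqrt_le_sqrt hgoal2
      _ = Real.sqrt (2*(N:ℝ)^2-1) * σmin := by
          rw [Real.sqrt_mul hcoef, Real.sqrt_sq hpos.le]
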